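/- Suppose a > 0 and c := a · sup{‖R_{a+ib}‖ : b ∈ ℝ} satisfies 0 < c < 1. Then there exists a function F from the open half-plane Ω = {w ∈ ℂ : Re(w) > a(1 − 1/c)} into the bounded linear operators on B which is analytic on Ω, agrees with R_w for all w with Re(w) > 0, and satisfies ‖F(w)‖ ≤ c / (a − c(a − Re(w))) for all w ∈ Ω with Re(w) ≤ a. (Note a(1 − 1/c) < 0, so the resolvent extends analytically with uniform bounds across the imaginary axis; hence the pseudospectral abscissa s₀ is negative.) -/

import Mathlib

open MeasureTheory Filter Set

lemma shiftIoi {E : Type*} [NormedAddCommGroup E] [NormedSpace ℝ E]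
    (h : ℝ → E) (t : ℝ) :
    ∫ u in Ioi t, h u = ∫ s in Ioi 0, h (s + t) := by
  rw [← integral_indicator measurableSet_Ioi, ← integral_indicator measurableSet_Ioi,
    ← integral_add_right_eq_self (fun u => (Ioi t).indicator h u) t]
  congr 1
  funext s
  by_cases hs : 0 < s
  · rw [indicator_of_mem (by simpa using hs) h,
      indicator_of_mem (mem_Ioi.mpr hs)]
  · rw [indicator_of_notMem (by simpa using hs) h,
      indicator_of_notMem (by simpa using hs)]

section key
variable {B : Type*} [NormedAddCommGroup B] [NormedSpace ℂ B] [CompleteSpace B]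

lemma key (T : ℝ → (B →L[ℂ] B))
    (hsemi : ∀ s : ℝ, 0 ≤ s → ∀ t : ℝ, 0 ≤ t → T (s + t) = (T s).comp (T t))
    (hcont : ∀ f : B, ContinuousOn (fun t => T t f) (Set.Ici (0:ℝ)))
    (Mb : ℝ) (hbound : ∀ t : ℝ, 0 ≤ t → ‖T t‖ ≤ Mb)
    (R : ℂ → (B →L[ℂ] B))
    (hRint : ∀ z : ℂ, 0 < z.re → ∀ f : B,
      MeasureTheory.IntegrableOn (fun s : ℝ => Complex.exp (-(z * s)) • T s f) (Set.Ioi 0))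
    (hR : ∀ z : ℂ, 0 < z.re → ∀ f : B,
      R z f = ∫ s in Set.Ioi (0:ℝ), Complex.exp (-(z * s)) • T s f)
    (z w : ℂ) (hz : 0 < z.re) (hw : 0 < w.re) (hne : z ≠ w) (f : B) :
    R z (R w f) = (w - z)⁻¹ • (R z f - R w f) := by
  have hwz : w - z ≠ 0 := sub_ne_zero.mpr (Ne.symm hne)
  set D : ℝ := Mb * ‖f‖ with hD
  have hTf : ∀ u : ℝ, 0 ≤ u → ‖T u f‖ ≤ D := fun u hu =>
    le_trans ((T u).le_opNorm f) (mul_le_mul_of_nonneg_right (hbound u hu) (norm_nonneg f))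
  set k : ℝ → ℝ → B := fun t u => Complex.exp ((w - z) * t - w * u) • T u f with hk
  set S : Set (ℝ × ℝ) := {p : ℝ × ℝ | 0 < p.1 ∧ p.1 < p.2} with hS
  have hSm : MeasurableSet S := by
    apply MeasurableSet.inter
    · exact measurableSet_lt measurable_const measurable_fst
    · exact measurableSet_lt measurable_fst measurable_snd
  set Kp : ℝ × ℝ → B := fun p => S.indicator (fun p => k p.1 p.2) p with hKp
  -- measurability
  have hTm : AEStronglyMeasurable ((Ioi (0:ℝ)).indicator (fun u => T u f)) volume := by
    rw [aestronglyMeasurable_indicator_iff measurableSet_Ioi]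
    exact ((hcont f).aestronglyMeasurable measurableSet_Ici).mono_measure
      (Measure.restrict_mono Ioi_subset_Ici_self le_rfl)
  have hKm : AEStronglyMeasurable Kp (volume.prod volume) := by
    have h1 : ∀ p ∈ S, k p.1 p.2
        = Complex.exp ((w - z) * p.1 - w * p.2) • (Ioi (0:ℝ)).indicator (fun u => T u f) p.2 := by
      intro p hp
      rcases hp with ⟨h1, h2⟩
      rw [indicator_of_mem (mem_Ioi.mpr (lt_trans h1 h2))]
    rw [hKp, Set.indicator_congr h1]
    apply AEStronglyMeasurable.indicator _ hSm
    apply AEStronglyMeasurable.smul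
    · exact (Complex.continuous_exp.comp (by fun_prop)).aestronglyMeasurable
    · exact hTm.comp_snd
  have hMb : 0 ≤ Mb := le_trans (norm_nonneg _) (hbound 0 le_rfl)
  have hD0 : 0 ≤ D := mul_nonneg hMb (norm_nonneg f)
  set J : ℝ := ∫ s in Ioi (0:ℝ), Real.exp (-w.re * s) with hJ
  have hJint : IntegrableOn (fun s : ℝ => Real.exp (-w.re * s)) (Ioi (0:ℝ)) :=
    exp_neg_integrableOn_Ioi 0 hw
  have hJ0 : 0 ≤ J := integral_nonneg (fun s => Real.exp_nonneg _)
  have hshift : ∀ t : ℝ, ∫ u in Ioi t, Real.exp (-w.re * u) = Real.exp (-w.re * t) * J := by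
    intro t
    rw [shiftIoi (fun u => Real.exp (-w.re * u)) t, hJ, ← integral_const_mul]
    congr 1
    funext s
    rw [← Real.exp_add]
    ring_nf
  have hnormk : ∀ t u : ℝ, 0 ≤ u →
      ‖k t u‖ ≤ Real.exp ((w.re - z.re) * t) * Real.exp (-w.re * u) * D := by
    intro t u hu
    have h1 : ‖k t u‖ = ‖Complex.exp ((w - z) * t - w * u)‖ * ‖T u f‖ := norm_smul _ _
    have h2 : ((w - z) * (t:ℂ) - w * u).re = (w.re - z.re) * t - w.re * u := by
      simp [Complex.sub_re, Complex.mul_re]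
    rw [h1, Complex.norm_exp, h2]
    have h3 : Real.exp ((w.re - z.re) * t) * Real.exp (-w.re * u)
        = Real.exp ((w.re - z.re) * t - w.re * u) := by
      rw [← Real.exp_add]; ring_nf
    rw [h3]
    exact mul_le_mul_of_nonneg_left (hTf u hu) (Real.exp_nonneg _)
  have hKnorm : ∀ p : ℝ × ℝ, ‖Kp p‖ ≤
      S.indicator (fun p => Real.exp ((w.re - z.re) * p.1) * Real.exp (-w.re * p.2) * D) p := by
    intro p
    simp only [hKp]
    rw [norm_indicator_eq_indicator_norm]
    by_cases hp : p ∈ S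
    · rw [indicator_of_mem hp, indicator_of_mem hp]
      exact hnormk p.1 p.2 (le_of_lt (lt_trans hp.1 hp.2))
    · rw [indicator_of_notMem hp, indicator_of_notMem hp]
  -- sectionwise description
  have hKsec : ∀ t : ℝ, 0 < t → (fun u => Kp (t, u))
      = (Ioi t).indicator (fun u => Complex.exp ((w - z) * t - w * u) • T u f) := by
    intro t ht
    funext u
    simp only [hKp]
    by_cases hu : t < u
    · rw [indicator_of_mem (show (t,u) ∈ S from ⟨ht, hu⟩), indicator_of_mem (mem_Ioi.mpr hu)]
    · rw [indicator_of_notMem (show (t,u) ∉ S from fun h => hu h.2),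
        indicator_of_notMem (by simpa using hu)]
  have hKsec0 : ∀ t : ℝ, ¬ (0 < t) → (fun u => Kp (t, u)) = fun _ => 0 := by
    intro t ht
    funext u
    simp only [hKp]
    rw [indicator_of_notMem (show (t,u) ∉ S from fun h => ht h.1)]
  -- integrand as a constant smul
  have hksplit : ∀ t u : ℝ, Complex.exp ((w - z) * (t:ℂ) - w * (u:ℂ)) • T u f
      = Complex.exp ((w - z) * (t:ℂ)) • (Complex.exp (-(w * (u:ℂ))) • T u f) := by
    intro t u
    rw [smul_smul, ← Complex.exp_add, sub_eq_add_neg]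
  have hksplitf : ∀ t : ℝ, (fun u : ℝ => Complex.exp ((w - z) * (t:ℂ) - w * (u:ℂ)) • T u f)
      = fun u : ℝ => Complex.exp ((w - z) * (t:ℂ)) • (Complex.exp (-(w * (u:ℂ))) • T u f) :=
    fun t => funext (hksplit t)
  have hKint : Integrable Kp (volume.prod volume) := by
    rw [integrable_prod_iff hKm]
    constructor
    · apply Filter.Eventually.of_forall
      intro t
      by_cases ht : 0 < t
      · rw [hKsec t ht, integrable_indicator_iff measurableSet_Ioi, hksplitf t]
        exact ((hRint w hw f).mono_set (Ioi_subset_Ioi (le_of_lt ht))).smul _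
      · rw [hKsec0 t ht]
        exact integrable_zero _ _ _
    · apply Integrable.mono'
        (g := fun t => (Ioi (0:ℝ)).indicator (fun t => Real.exp (-z.re * t) * (J * D)) t)
      · rw [integrable_indicator_iff measurableSet_Ioi]
        exact (exp_neg_integrableOn_Ioi 0 hz).mul_const _
      · exact hKm.norm.integral_prod_right'
      · apply Filter.Eventually.of_forall
        intro t
        have hnn : 0 ≤ ∫ u, ‖Kp (t, u)‖ := integral_nonneg (fun u => norm_nonneg _)
        rw [Real.norm_of_nonneg hnn]
        by_cases ht : 0 < t
        · have hle : ∫ u, ‖Kp (t, u)‖ ≤ ∫ u, (Ioi t).indicator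
              (fun u => Real.exp ((w.re - z.re) * t) * Real.exp (-w.re * u) * D) u := by
            apply integral_mono_of_nonneg
            · exact Filter.Eventually.of_forall (fun u => norm_nonneg _)
            · rw [integrable_indicator_iff measurableSet_Ioi]
              apply Integrable.mul_const
              apply Integrable.const_mul
              exact (exp_neg_integrableOn_Ioi t hw)
            · apply Filter.Eventually.of_forall
              intro u
              have hknm := hKnorm (t, u)
              by_cases hu : t < u
              · rw [indicator_of_mem (mem_Ioi.mpr hu)]
                rwa [indicator_of_mem (show (t,u) ∈ S from ⟨ht, hu⟩)] at hknm
              · rw [indicator_of_notMem (by simpa using hu)]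
                rwa [indicator_of_notMem (show (t,u) ∉ S from fun h => hu h.2)] at hknm
          have heval : ∫ u, (Ioi t).indicator
              (fun u => Real.exp ((w.re - z.re) * t) * Real.exp (-w.re * u) * D) u
              = Real.exp (-z.re * t) * (J * D) := by
            rw [integral_indicator measurableSet_Ioi]
            have : ∀ u : ℝ, Real.exp ((w.re - z.re) * t) * Real.exp (-w.re * u) * D
                = (Real.exp ((w.re - z.re) * t) * D) * Real.exp (-w.re * u) := by
              intro u; ring
            rw [funext this, integral_const_mul, hshift t]
            rw [show Real.exp ((w.re - z.re) * t) * D * (Real.exp (-w.re * t) * J)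
              = (Real.exp ((w.re - z.re) * t) * Real.exp (-w.re * t)) * (J * D) from by ring,
              ← Real.exp_add, show (w.re - z.re) * t + -w.re * t = -z.re * t from by ring]
          rw [indicator_of_mem (mem_Ioi.mpr ht)]
          rw [heval] at hle
          exact hle
        · have h0 : ∀ u : ℝ, Kp (t, u) = 0 := fun u => congrFun (hKsec0 t ht) u
          simp only [h0, norm_zero, integral_zero]
          rw [indicator_of_notMem (by simpa using ht)]
  -- inner representation for t > 0
  have hinner : ∀ t : ℝ, 0 < t →
      Complex.exp (-(z * (t:ℂ))) • T t (R w f) = ∫ u, Kp (t, u) := by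
    intro t ht
    have e1 : T t (R w f) = ∫ s in Ioi (0:ℝ), Complex.exp (-(w * (s:ℂ))) • T t (T s f) := by
      rw [hR w hw f, ← ContinuousLinearMap.integral_comp_comm (T t) (hRint w hw f)]
      congr 1
      funext s
      rw [_root_.map_smul]
    have e2 : ∫ s in Ioi (0:ℝ), Complex.exp (-(w * (s:ℂ))) • T t (T s f)
        = ∫ s in Ioi (0:ℝ), Complex.exp (-(w * (s:ℂ))) • T (t + s) f := by
      apply setIntegral_congr_fun measurableSet_Ioi
      intro s hs
      show Complex.exp (-(w * (s:ℂ))) • T t (T s f)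
          = Complex.exp (-(w * (s:ℂ))) • T (t + s) f
      rw [hsemi t (le_of_lt ht) s (le_of_lt (mem_Ioi.mp hs))]
      rfl
    have e4 : ∀ s : ℝ, Complex.exp (-(z * (t:ℂ))) • (Complex.exp (-(w * (s:ℂ))) • T (t + s) f)
        = k t (s + t) := by
      intro s
      simp only [hk]
      have hsc : -(z*(t:ℂ)) + -(w*(s:ℂ)) = (w - z)*(t:ℂ) - w*(((s+t : ℝ)):ℂ) := by
        push_cast; ring
      rw [smul_smul, ← Complex.exp_add, hsc, add_comm t s]
    have e5 : ∫ s in Ioi (0:ℝ), k t (s + t) = ∫ u in Ioi t, k t u := (shiftIoi (k t) t).symm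
    have e6 : ∫ u in Ioi t, k t u = ∫ u, Kp (t, u) := by
      rw [← integral_indicator measurableSet_Ioi]
      congr 1
      funext u
      by_cases hu : t < u
      · rw [indicator_of_mem (mem_Ioi.mpr hu)]
        simp only [hKp]
        rw [indicator_of_mem (show (t,u) ∈ S from ⟨ht, hu⟩)]
      · rw [indicator_of_notMem (by simpa using hu)]
        simp only [hKp]
        rw [indicator_of_notMem (show (t,u) ∉ S from fun h => hu h.2)]
    calc Complex.exp (-(z * (t:ℂ))) • T t (R w f)
        = ∫ s in Ioi (0:ℝ), Complex.exp (-(z * (t:ℂ)))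
            • (Complex.exp (-(w * (s:ℂ))) • T (t + s) f) := by
          rw [e1, e2, integral_smul]
      _ = ∫ s in Ioi (0:ℝ), k t (s + t) := by simp only [e4]
      _ = ∫ u in Ioi t, k t u := e5
      _ = ∫ u, Kp (t, u) := e6
  -- assemble the left hand side
  have lhs1 : R z (R w f) = ∫ t, ∫ u, Kp (t, u) := by
    rw [hR z hz (R w f)]
    have hstep : ∫ t in Ioi (0:ℝ), Complex.exp (-(z * (t:ℂ))) • T t (R w f)
        = ∫ t in Ioi (0:ℝ), ∫ u, Kp (t, u) :=
      setIntegral_congr_fun measurableSet_Ioi (fun t ht => hinner t (mem_Ioi.mp ht))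
    rw [hstep, ← integral_indicator measurableSet_Ioi]
    congr 1
    funext t
    by_cases ht : 0 < t
    · rw [indicator_of_mem (mem_Ioi.mpr ht)]
    · rw [indicator_of_notMem (by simpa using ht)]
      have h0 : ∀ u : ℝ, Kp (t, u) = 0 := fun u => congrFun (hKsec0 t ht) u
      simp [h0]
  have hswap : ∫ t, ∫ u, Kp (t, u) = ∫ u, ∫ t, Kp (t, u) := by
    apply integral_integral_swap
    exact hKint
  have hcol : ∀ u : ℝ, (∫ t, Kp (t, u))
      = (Ioi (0:ℝ)).indicator (fun u => ((Complex.exp ((w - z) * (u:ℂ)) - 1)/(w-z))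
          • (Complex.exp (-(w * (u:ℂ))) • T u f)) u := by
    intro u
    by_cases hu : 0 < u
    · have h1 : ∀ t : ℝ, Kp (t, u) = (Ioo (0:ℝ) u).indicator
          (fun t => Complex.exp ((w - z) * (t:ℂ)) • (Complex.exp (-(w * (u:ℂ))) • T u f)) t := by
        intro t
        by_cases ht : 0 < t ∧ t < u
        · simp only [hKp]
          rw [indicator_of_mem (show (t,u) ∈ S from ht),
            indicator_of_mem (show t ∈ Ioo 0 u from ⟨ht.1, ht.2⟩)]
          exact hksplit t u
        · simp only [hKp]
          rw [indicator_of_notMem (show (t,u) ∉ S from ht),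
            indicator_of_notMem (show t ∉ Ioo 0 u from fun hm => ht ⟨hm.1, hm.2⟩)]
      simp only [h1]
      rw [integral_indicator measurableSet_Ioo, integral_smul_const,
        indicator_of_mem (mem_Ioi.mpr hu)]
      congr 1
      rw [← integral_Ioc_eq_integral_Ioo, ← intervalIntegral.integral_of_le (le_of_lt hu),
        integral_exp_mul_complex hwz]
      norm_num
    · rw [indicator_of_notMem (by simpa using hu)]
      have h0 : ∀ t : ℝ, Kp (t, u) = 0 := by
        intro t
        simp only [hKp]
        exact indicator_of_notMem (fun h => hu (lt_trans h.1 h.2)) _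
      simp [h0]
  have final : ∫ u, (Ioi (0:ℝ)).indicator (fun u => ((Complex.exp ((w - z) * (u:ℂ)) - 1)/(w-z))
          • (Complex.exp (-(w * (u:ℂ))) • T u f)) u
      = (w - z)⁻¹ • (R z f - R w f) := by
    rw [integral_indicator measurableSet_Ioi]
    have h2 : ∀ u : ℝ, ((Complex.exp ((w - z) * (u:ℂ)) - 1)/(w-z))
          • (Complex.exp (-(w * (u:ℂ))) • T u f)
        = (w - z)⁻¹ • (Complex.exp (-(z * (u:ℂ))) • T u f
            - Complex.exp (-(w * (u:ℂ))) • T u f) := by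
      intro u
      rw [smul_sub, smul_smul, smul_smul, smul_smul, ← sub_smul]
      congr 1
      rw [show Complex.exp (-(z*(u:ℂ)))
          = Complex.exp ((w - z)*(u:ℂ)) * Complex.exp (-(w*(u:ℂ))) from by
        rw [← Complex.exp_add]; congr 1; ring]
      field_simp
    simp only [h2]
    rw [integral_smul, integral_sub (hRint z hz f) (hRint w hw f), ← hR z hz f, ← hR w hw f]
  rw [lhs1, hswap]
  simp only [hcol]
  exact final

end key

section aux
variable {B : Type*} [NormedAddCommGroup B] [NormedSpace ℂ B] [CompleteSpace B]

lemma inv_one_sub_norm_le (t : B →L[ℂ] B) (h : ‖t‖ < 1) :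
    ‖Ring.inverse (1 - t)‖ ≤ (1 - ‖t‖)⁻¹ := by
  rw [← geom_series_eq_inverse t h]
  refine tsum_of_norm_bounded (hasSum_geometric_of_lt_one (norm_nonneg t) h) (fun n => ?_)
  cases n with
  | zero => simp only [pow_zero]; exact ContinuousLinearMap.norm_id_le
  | succ n => exact norm_pow_le' t n.succ_pos

lemma z0_sub (a : ℝ) (w : ℂ) : ((a : ℂ) + w.im * Complex.I) - w = ((a - w.re : ℝ) : ℂ) := by
  apply Complex.ext <;> simp

lemma z0_re (a : ℝ) (w : ℂ) : ((a : ℂ) + w.im * Complex.I).re = a := by simp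

lemma Gdiff (A : B →L[ℂ] B) (z1 w0 : ℂ) (h : ‖(z1 - w0) • A‖ < 1) :
    DifferentiableAt ℂ (fun w => A * Ring.inverse (1 - (z1 - w) • A)) w0 := by
  have h1 : DifferentiableAt ℂ (fun w : ℂ => (1 : B →L[ℂ] B) - (z1 - w) • A) w0 :=
    (differentiableAt_const _).sub
      (((differentiableAt_const z1).sub differentiableAt_id).smul_const A)
  have h2 : DifferentiableAt ℂ Ring.inverse ((1 : B →L[ℂ] B) - (z1 - w0) • A) :=
    differentiableAt_inverse (isUnit_one_sub_of_norm_lt_one h)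
  exact (h2.comp w0 h1).const_mul A

variable (R : ℂ → (B →L[ℂ] B))
variable (hres : ∀ z w : ℂ, 0 < z.re → 0 < w.re → R z - R w = (w - z) • (R z * R w))

include hres in
lemma Rcomm : ∀ z w : ℂ, 0 < z.re → 0 < w.re → Commute (R z) (R w) := by
  intro z w hz hw
  rcases eq_or_ne z w with rfl | hne
  · exact Commute.refl _
  · have h1 := hres z w hz hw
    have h2 := hres w z hw hz
    have h3 : R z - R w = (w - z) • (R w * R z) := by
      have : -(R w - R z) = -((z - w) • (R w * R z)) := by rw [h2]
      rw [neg_sub, ← neg_smul, neg_sub] at this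
      exact this
    have h4 : (w - z) • (R z * R w) = (w - z) • (R w * R z) := by rw [← h1, h3]
    exact smul_right_injective _ (sub_ne_zero.mpr (Ne.symm hne)) h4

include hres in
lemma neumann (z w : ℂ) (hz : 0 < z.re) (hw : 0 < w.re)
    (h : ‖(z - w) • R z‖ < 1) :
    R w = R z * Ring.inverse (1 - (z - w) • R z) := by
  set u : (B →L[ℂ] B)ˣ := Units.oneSub _ h with hu
  have hkey : R w * (u : B →L[ℂ] B) = R z := by
    have hval : (u : B →L[ℂ] B) = 1 - (z - w) • R z := rfl
    have h2 : R w - R z = (z - w) • (R z * R w) := by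
      rw [hres w z hw hz, (Rcomm R hres w z hw hz).eq]
    rw [hval, mul_sub, mul_one, mul_smul_comm, ← (Rcomm R hres z w hz hw).eq, ← h2]
    abel
  rw [NormedRing.inverse_one_sub _ h]
  exact (Units.eq_mul_inv_iff_mul_eq u).mpr hkey

include hres in
lemma cross (z z' w : ℂ) (hz : 0 < z.re) (hz' : 0 < z'.re)
    (h : ‖(z - w) • R z‖ < 1) (h' : ‖(z' - w) • R z'‖ < 1) :
    R z * Ring.inverse (1 - (z - w) • R z) = R z' * Ring.inverse (1 - (z' - w) • R z') := by
  set u : (B →L[ℂ] B)ˣ := Units.oneSub _ h with hu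
  set u' : (B →L[ℂ] B)ˣ := Units.oneSub _ h' with hu'
  have hval : (u : B →L[ℂ] B) = 1 - (z - w) • R z := rfl
  have hval' : (u' : B →L[ℂ] B) = 1 - (z' - w) • R z' := rfl
  have hcomm := Rcomm R hres z z' hz hz'
  have hkey : R z * (u' : B →L[ℂ] B) = R z' * (u : B →L[ℂ] B) := by
    rw [hval, hval', mul_sub, mul_sub, mul_one, mul_one, mul_smul_comm, mul_smul_comm,
      ← hcomm.eq]
    have expand : (z' - w) • (R z * R z') - (z - w) • (R z * R z')
        = (z' - z) • (R z * R z') := by rw [← sub_smul]; ring_nf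
    have hzz : R z - (z' - w) • (R z * R z') - (R z' - (z - w) • (R z * R z')) = 0 := by
      rw [sub_sub_sub_comm, hres z z' hz hz', ← expand]
      abel
    exact sub_eq_zero.mp hzz
  have hcu : Commute (u : B →L[ℂ] B) (u' : B →L[ℂ] B) := by
    rw [hval, hval']
    have hAB : Commute ((z - w) • R z) ((z' - w) • R z') := (hcomm.smul_left _).smul_right _
    exact ((Commute.one_left _).sub_left ((Commute.one_right _).sub_right hAB))
  rw [NormedRing.inverse_one_sub _ h, NormedRing.inverse_one_sub _ h']
  calc R z * ↑u⁻¹ = (R z * ↑u') * (↑u'⁻¹ * ↑u⁻¹) := by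
        rw [mul_assoc, ← mul_assoc (u' : B →L[ℂ] B), Units.mul_inv, one_mul]
    _ = (R z' * ↑u) * (↑u'⁻¹ * ↑u⁻¹) := by rw [hkey]
    _ = R z' * (↑u * ↑u'⁻¹) * ↑u⁻¹ := by rw [mul_assoc, mul_assoc, mul_assoc]
    _ = R z' * (↑u'⁻¹ * ↑u) * ↑u⁻¹ := by rw [(hcu.units_inv_right).eq]
    _ = R z' * ↑u'⁻¹ := by rw [mul_assoc, mul_assoc, Units.mul_inv, mul_one]

end aux

theorem stmt_7
    {B : Type*} [NormedAddCommGroup B] [NormedSpace ℂ B] [CompleteSpace B]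
    (T : ℝ → (B →L[ℂ] B))
    (hT0 : T 0 = 1)
    (hsemi : ∀ s : ℝ, 0 ≤ s → ∀ t : ℝ, 0 ≤ t → T (s + t) = (T s).comp (T t))
    (hcont : ∀ f : B, ContinuousOn (fun t => T t f) (Set.Ici (0:ℝ)))
    (Mb : ℝ) (hbound : ∀ t : ℝ, 0 ≤ t → ‖T t‖ ≤ Mb)
    (R : ℂ → (B →L[ℂ] B))
    (hRint : ∀ z : ℂ, 0 < z.re → ∀ f : B,
      MeasureTheory.IntegrableOn (fun s : ℝ => Complex.exp (-(z * s)) • T s f) (Set.Ioi 0))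
    (hR : ∀ z : ℂ, 0 < z.re → ∀ f : B,
      R z f = ∫ s in Set.Ioi (0:ℝ), Complex.exp (-(z * s)) • T s f)
    (a : ℝ) (ha : 0 < a)
    (hBdd : BddAbove (Set.range fun b : ℝ => ‖R (a + b * Complex.I)‖))
    (c : ℝ) (hc : c = a * sSup (Set.range fun b : ℝ => ‖R (a + b * Complex.I)‖))
    (hc0 : 0 < c) (hc1 : c < 1) :
    ∃ F : ℂ → (B →L[ℂ] B),
      DifferentiableOn ℂ F {w : ℂ | a * (1 - 1/c) < w.re} ∧
      (∀ w : ℂ, 0 < w.re → F w = R w) ∧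
      (∀ w : ℂ, a * (1 - 1/c) < w.re → w.re ≤ a →
        ‖F w‖ ≤ c / (a - c * (a - w.re))) := by
  have hres : ∀ z w : ℂ, 0 < z.re → 0 < w.re → R z - R w = (w - z) • (R z * R w) := by
    intro z w hz hw
    rcases eq_or_ne z w with rfl | hne
    · simp
    · ext f
      have hk := key T hsemi hcont Mb hbound R hRint hR z w hz hw hne f
      have hwz : w - z ≠ 0 := sub_ne_zero.mpr (Ne.symm hne)
      simp only [ContinuousLinearMap.sub_apply, ContinuousLinearMap.smul_apply,
        ContinuousLinearMap.mul_apply]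
      rw [hk, smul_inv_smul₀ hwz]
  -- sup bound
  have hRnorm : ∀ b : ℝ, ‖R ((a:ℂ) + b * Complex.I)‖ ≤ c / a := by
    intro b
    have h1 : ‖R ((a:ℂ) + b * Complex.I)‖
        ≤ sSup (Set.range fun b : ℝ => ‖R (a + b * Complex.I)‖) :=
      le_csSup hBdd ⟨b, rfl⟩
    have h2 : sSup (Set.range fun b : ℝ => ‖R (a + b * Complex.I)‖) = c / a := by
      rw [hc, mul_div_cancel_left₀ _ (ne_of_gt ha)]
    linarith
  have hca : 0 < c / a := div_pos hc0 ha
  have hac : a < a / c := by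
    rw [lt_div_iff₀ hc0]; nlinarith
  -- the extension
  set z0 : ℂ → ℂ := fun w => (a:ℂ) + w.im * Complex.I with hz0
  have hz0re : ∀ w, (z0 w).re = a := fun w => z0_re a w
  set F : ℂ → (B →L[ℂ] B) := fun w =>
    if 0 < w.re then R w
    else R (z0 w) * Ring.inverse (1 - (z0 w - w) • R (z0 w)) with hF
  have hone : (a / c) * (c / a) = 1 := by field_simp
  have haa : a * (1 - 1/c) = a - a / c := by field_simp
  -- norm of the perturbation
  have hτnorm : ∀ w : ℂ, ‖(z0 w - w) • R (z0 w)‖ ≤ |a - w.re| * (c / a) := by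
    intro w
    rw [show z0 w - w = ((a - w.re : ℝ) : ℂ) from z0_sub a w,
      norm_smul ((a - w.re : ℝ) : ℂ) (R (z0 w)), Complex.norm_real, Real.norm_eq_abs]
    exact mul_le_mul_of_nonneg_left (hRnorm w.im) (abs_nonneg _)
  have hτlt : ∀ w : ℂ, a - a / c < w.re → w.re ≤ a → ‖(z0 w - w) • R (z0 w)‖ < 1 := by
    intro w h1 h2
    refine lt_of_le_of_lt (hτnorm w) ?_
    rw [abs_of_nonneg (by linarith)]
    calc (a - w.re) * (c / a) < (a / c) * (c / a) :=
          mul_lt_mul_of_pos_right (by linarith) hca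
      _ = 1 := hone
  -- representation of F on the strip
  have hFrep : ∀ w : ℂ, a - a / c < w.re → w.re ≤ a →
      F w = R (z0 w) * Ring.inverse (1 - (z0 w - w) • R (z0 w)) := by
    intro w h1 h2
    by_cases hw : 0 < w.re
    · have : F w = R w := if_pos hw
      rw [this]
      exact neumann R hres (z0 w) w (by rw [hz0re]; exact ha) hw (hτlt w h1 h2)
    · exact if_neg hw
  refine ⟨F, ?_, ?_, ?_⟩
  · -- differentiability
    intro w0 hw0
    simp only [Set.mem_setOf_eq, haa] at hw0
    apply DifferentiableAt.differentiableWithinAt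
    by_cases hpos : 0 < w0.re
    · -- right half plane case
      set r : ℝ := min w0.re (‖R w0‖ + 1)⁻¹ with hr
      have hrpos : 0 < r := lt_min hpos (by positivity)
      have hG : DifferentiableAt ℂ (fun w => R w0 * Ring.inverse (1 - (w0 - w) • R w0)) w0 :=
        Gdiff (R w0) w0 w0 (by simp)
      refine hG.congr_of_eventuallyEq ?_
      filter_upwards [Metric.ball_mem_nhds w0 hrpos] with w hw
      have hdist : ‖w - w0‖ < r := by
        rw [← dist_eq_norm]; exact Metric.mem_ball.mp hw
      have hwre : 0 < w.re := by
        have h1 : |(w - w0).re| ≤ ‖w - w0‖ := Complex.abs_re_le_norm _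
        have h2 : (w - w0).re = w.re - w0.re := by simp
        have h3 : r ≤ w0.re := min_le_left _ _
        rw [h2] at h1
        cases abs_le.mp h1 with | intro hl hr' => linarith
      have hτ : ‖(w0 - w) • R w0‖ < 1 := by
        rw [norm_smul (w0 - w) (R w0)]
        have h1 : ‖w0 - w‖ < (‖R w0‖ + 1)⁻¹ := by
          rw [norm_sub_rev]; exact lt_of_lt_of_le hdist (min_le_right _ _)
        have h2 : (0:ℝ) < ‖R w0‖ + 1 := by positivity
        calc ‖w0 - w‖ * ‖R w0‖ ≤ ‖w0 - w‖ * (‖R w0‖ + 1) := by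
              apply mul_le_mul_of_nonneg_left (by linarith) (norm_nonneg _)
          _ < (‖R w0‖ + 1)⁻¹ * (‖R w0‖ + 1) := by
              apply mul_lt_mul_of_pos_right h1 h2
          _ = 1 := inv_mul_cancel₀ (ne_of_gt h2)
      show F w = R w0 * Ring.inverse (1 - (w0 - w) • R w0)
      rw [show F w = R w from if_pos hwre]
      exact neumann R hres w0 w hpos hwre hτ
    · -- strip case
      push_neg at hpos
      set z1 : ℂ := z0 w0 with hz1
      have hz1re : (0:ℝ) < z1.re := by rw [hz1, hz0re]; exact ha
      have hd : a - w0.re < a / c := by linarith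
      set r : ℝ := (a / c - (a - w0.re)) / 2 with hr
      have hrpos : 0 < r := by rw [hr]; linarith
      have hz1w0 : ‖z1 - w0‖ = a - w0.re := by
        rw [hz1, show z0 w0 - w0 = ((a - w0.re : ℝ) : ℂ) from z0_sub a w0,
          Complex.norm_real, Real.norm_eq_abs, abs_of_nonneg (by linarith)]
      have hz1norm : ‖R z1‖ ≤ c / a := hRnorm w0.im
      have hkey : ∀ w : ℂ, ‖w - w0‖ < r → ‖(z1 - w) • R z1‖ < 1 := by
        intro w hw
        rw [norm_smul (z1 - w) (R z1)]
        have h1 : ‖z1 - w‖ ≤ ‖z1 - w0‖ + ‖w0 - w‖ := by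
          calc ‖z1 - w‖ = ‖(z1 - w0) + (w0 - w)‖ := by ring_nf
            _ ≤ _ := norm_add_le _ _
        have h2 : ‖z1 - w‖ < a / c := by
          rw [hz1w0] at h1
          rw [norm_sub_rev] at hw
          rw [hr] at hw
          linarith
        calc ‖z1 - w‖ * ‖R z1‖ ≤ ‖z1 - w‖ * (c / a) :=
              mul_le_mul_of_nonneg_left hz1norm (norm_nonneg _)
          _ < (a / c) * (c / a) := by
              apply mul_lt_mul_of_pos_right h2 hca
          _ = 1 := hone
      have hG : DifferentiableAt ℂ (fun w => R z1 * Ring.inverse (1 - (z1 - w) • R z1)) w0 :=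
        Gdiff (R z1) z1 w0 (hkey w0 (by simpa using hrpos))
      refine hG.congr_of_eventuallyEq ?_
      filter_upwards [Metric.ball_mem_nhds w0 hrpos] with w hw
      have hdist : ‖w - w0‖ < r := by rw [← dist_eq_norm]; exact Metric.mem_ball.mp hw
      have hτ1 : ‖(z1 - w) • R z1‖ < 1 := hkey w hdist
      have hwrelb : w0.re - r < w.re := by
        have h1 : |(w - w0).re| ≤ ‖w - w0‖ := Complex.abs_re_le_norm _
        have h2 : (w - w0).re = w.re - w0.re := by simp
        rw [h2] at h1
        cases abs_le.mp h1 with | intro hl hr' => linarith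
      show F w = R z1 * Ring.inverse (1 - (z1 - w) • R z1)
      by_cases hwre : 0 < w.re
      · rw [show F w = R w from if_pos hwre]
        exact neumann R hres z1 w hz1re hwre hτ1
      · have hwre' : w.re ≤ 0 := le_of_not_gt hwre
        have hwr : a - a / c < w.re := by rw [hr] at hwrelb; linarith
        have hτ0 : ‖(z0 w - w) • R (z0 w)‖ < 1 := hτlt w hwr (by linarith)
        rw [show F w = R (z0 w) * Ring.inverse (1 - (z0 w - w) • R (z0 w)) from if_neg hwre]
        exact cross R hres (z0 w) z1 w (by rw [hz0re]; exact ha) hz1re hτ0 hτ1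
  · -- agreement with R
    intro w hw
    exact if_pos hw
  · -- the norm bound
    intro w h1 h2
    rw [haa] at h1
    have h1' : a - a / c < w.re := h1
    rw [hFrep w h1' h2]
    have hτ : ‖(z0 w - w) • R (z0 w)‖ < 1 := hτlt w h1' h2
    have hρ : (a - w.re) * (c / a) < 1 := by
      calc (a - w.re) * (c / a) < (a / c) * (c / a) :=
            mul_lt_mul_of_pos_right (by linarith) hca
        _ = 1 := hone
    have hρ0 : 0 ≤ (a - w.re) * (c / a) := by
      apply mul_nonneg (by linarith) (le_of_lt hca)
    have hτρ : ‖(z0 w - w) • R (z0 w)‖ ≤ (a - w.re) * (c / a) := by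
      have := hτnorm w
      rwa [abs_of_nonneg (by linarith : (0:ℝ) ≤ a - w.re)] at this
    have hinv : ‖Ring.inverse (1 - (z0 w - w) • R (z0 w))‖
        ≤ (1 - (a - w.re) * (c / a))⁻¹ := by
      refine le_trans (inv_one_sub_norm_le _ hτ) ?_
      apply inv_anti₀ (by linarith) (by linarith)
    have hmul : ‖R (z0 w) * Ring.inverse (1 - (z0 w - w) • R (z0 w))‖
        ≤ (c / a) * (1 - (a - w.re) * (c / a))⁻¹ := by
      refine le_trans (norm_mul_le _ _) ?_
      exact mul_le_mul (hRnorm w.im) hinv (norm_nonneg _) (le_of_lt hca)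
    refine le_trans hmul (le_of_eq ?_)
    have hden : 0 < a - c * (a - w.re) := by
      have : c * (a - w.re) < c * (a / c) := by
        apply mul_lt_mul_of_pos_left (by linarith) hc0
      rw [mul_div_cancel₀ a (ne_of_gt hc0)] at this
      linarith
    have hne : a - c * (a - w.re) ≠ 0 := ne_of_gt hden
    rw [show (1:ℝ) - (a - w.re) * (c / a) = (a - c * (a - w.re)) / a from by
      field_simp]
    rw [inv_div, div_mul_div_comm, mul_comm a (a - c * (a - w.re)),
      mul_div_mul_right _ _ (ne_of_gt ha)]
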